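/- Let Ω ⊂ ℝ³ be a bounded measurable set, Γ ⊂ ℝ³ a compact set with dist(Γ, Ω) > 0, σ a finite Borel measure on Γ, T > 0, c > 0, and λ : ℝ³ × ℝ → ℝ a bounded measurable function with λ(y,t) = 0 for t ≤ 0. Let f ∈ L¹(Ω) and let V : Γ × ℝ → ℝ be bounded measurable with V(x,t) = 0 for t ∉ (0,T]. Define (ℱf)(x,t) = ∫_Ω λ(y, t − ‖x−y‖/c) f(y) / (4π‖x−y‖) dy and W(y,s) = ∫_Γ V(x, s + ‖x−y‖/c) / (4π‖x−y‖) dσ(x). Then ∫₀^T ∫_Γ (ℱf)(x,t) V(x,t) dσ(x) dt = ∫_Ω f(y) ( ∫₀^T λ(y,s) W(y,s) ds ) dy. -/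

import Mathlib

open MeasureTheory Set Real

noncomputable section

set_option maxHeartbeats 1600000

/-- The adjoint identity for the forward operator of the flow-measurement model: with
`(ℱf)(x,t) = ∫_Ω λ(y, t − ‖x−y‖/c) f(y)/(4π‖x−y‖) dy` and the time-reversed potential
`W(y,s) = ∫_Γ V(x, s + ‖x−y‖/c)/(4π‖x−y‖) dσ(x)`, one has
`∫₀^T ∫_Γ (ℱf) V dσ dt = ∫_Ω f(y) (∫₀^T λ(y,s) W(y,s) ds) dy`, i.e.
`(ℱ*V)(y) = ∫₀^T λ(y,s) W(y,s) ds`. -/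
theorem forwardOp_adjoint_identity
    (Ω : Set (EuclideanSpace ℝ (Fin 3))) (hΩmeas : MeasurableSet Ω)
    (hΩbdd : Bornology.IsBounded Ω)
    (Γ : Set (EuclideanSpace ℝ (Fin 3))) (hΓ : IsCompact Γ)
    (m : ℝ) (hm : 0 < m) (hsep : ∀ x ∈ Γ, ∀ y ∈ Ω, m ≤ dist x y)
    (σ : Measure (EuclideanSpace ℝ (Fin 3))) [IsFiniteMeasure σ]
    (T : ℝ) (hT : 0 < T) (c : ℝ) (hc : 0 < c)
    (lam : EuclideanSpace ℝ (Fin 3) → ℝ → ℝ)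
    (hlamMeas : Measurable fun p : EuclideanSpace ℝ (Fin 3) × ℝ => lam p.1 p.2)
    (hlamBdd : ∃ C, ∀ y t, |lam y t| ≤ C)
    (hlam0 : ∀ y, ∀ t ≤ (0 : ℝ), lam y t = 0)
    (f : EuclideanSpace ℝ (Fin 3) → ℝ) (hf : Integrable f (volume.restrict Ω))
    (V : EuclideanSpace ℝ (Fin 3) → ℝ → ℝ)
    (hVMeas : Measurable fun p : EuclideanSpace ℝ (Fin 3) × ℝ => V p.1 p.2)
    (hVBdd : ∃ C, ∀ x t, |V x t| ≤ C)
    (hV0 : ∀ x : EuclideanSpace ℝ (Fin 3), ∀ t : ℝ, t ∉ Ioc (0 : ℝ) T → V x t = 0)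
    (F : EuclideanSpace ℝ (Fin 3) → ℝ → ℝ)
    (hF : ∀ x t, F x t = ∫ y in Ω, lam y (t - dist x y / c) * f y / (4 * π * dist x y))
    (W : EuclideanSpace ℝ (Fin 3) → ℝ → ℝ)
    (hW : ∀ y s, W y s = ∫ x in Γ, V x (s + dist x y / c) / (4 * π * dist x y) ∂σ) :
    (∫ t in Ioc (0 : ℝ) T, ∫ x in Γ, F x t * V x t ∂σ) =
      ∫ y in Ω, f y * ∫ s in Ioc (0 : ℝ) T, lam y s * W y s := by
  classical
  obtain ⟨Cl, hCl⟩ := hlamBdd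
  obtain ⟨Cv, hCv⟩ := hVBdd
  have hCl0 : 0 ≤ Cl := (abs_nonneg _).trans (hCl 0 0)
  have hCv0 : 0 ≤ Cv := (abs_nonneg _).trans (hCv 0 0)
  set μt : Measure ℝ := volume.restrict (Ioc (0 : ℝ) T) with hμt
  set μΓ : Measure (EuclideanSpace ℝ (Fin 3)) := σ.restrict Γ with hμΓ
  set μΩ : Measure (EuclideanSpace ℝ (Fin 3)) := volume.restrict Ω with hμΩ
  haveI : IsFiniteMeasure μt :=
    ⟨by rw [hμt, Measure.restrict_apply_univ]; simp [Real.volume_Ioc]⟩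
  haveI : IsFiniteMeasure μΓ :=
    ⟨by rw [hμΓ, Measure.restrict_apply_univ]; exact measure_lt_top σ Γ⟩
  haveI : IsFiniteMeasure μΩ :=
    ⟨by rw [hμΩ, Measure.restrict_apply_univ]; exact hΩbdd.measure_lt_top⟩
  -- the time-shift identity
  have hshift : ∀ (x y : (EuclideanSpace ℝ (Fin 3))) (a : ℝ), 0 < a →
      (∫ t in Ioc (0 : ℝ) T, lam y (t - a) * V x t) =
        ∫ s in Ioc (0 : ℝ) T, lam y s * V x (s + a) := by
    intro x y a ha
    have h1 : (∫ t in Ioc (0 : ℝ) T, lam y (t - a) * V x t) =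
        ∫ t, lam y (t - a) * V x t :=
      setIntegral_eq_integral_of_forall_compl_eq_zero fun t ht => by
        rw [hV0 x t ht, mul_zero]
    have h2 : (∫ s in Ioc (0 : ℝ) T, lam y s * V x (s + a)) =
        ∫ s, lam y s * V x (s + a) :=
      setIntegral_eq_integral_of_forall_compl_eq_zero fun s hs => by
        by_cases h : s ≤ 0
        · rw [hlam0 y s h, zero_mul]
        · push_neg at h
          have hsT : T < s := by
            by_contra h'
            push_neg at h'
            exact hs ⟨h, h'⟩
          rw [hV0 x (s + a) (fun hmem => absurd hmem.2 (not_le.mpr (by linarith))),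
            mul_zero]
    rw [h1, h2]
    calc (∫ t, lam y (t - a) * V x t)
        = ∫ t, (fun u => lam y u * V x (u + a)) (t - a) := by
          congr 1
          funext t
          simp
      _ = ∫ s, lam y s * V x (s + a) :=
          integral_sub_right_eq_self (fun u => lam y u * V x (u + a)) a
  -- master integrand on ℝ × ((EuclideanSpace ℝ (Fin 3)) × (EuclideanSpace ℝ (Fin 3)))
  set G : ℝ × ((EuclideanSpace ℝ (Fin 3)) × (EuclideanSpace ℝ (Fin 3))) → ℝ := fun p =>
    lam p.2.2 (p.1 - dist p.2.1 p.2.2 / c) * f p.2.2 / (4 * π * dist p.2.1 p.2.2)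
      * V p.2.1 p.1 with hG
  -- measurability of pieces
  have hA : Measurable fun p : ℝ × ((EuclideanSpace ℝ (Fin 3)) × (EuclideanSpace ℝ (Fin 3))) =>
      lam p.2.2 (p.1 - dist p.2.1 p.2.2 / c) :=
    hlamMeas.comp ((measurable_snd.snd).prodMk
      (measurable_fst.sub ((measurable_dist.comp measurable_snd).div_const c)))
  have hK : Measurable fun p : ℝ × ((EuclideanSpace ℝ (Fin 3)) × (EuclideanSpace ℝ (Fin 3))) => 4 * π * dist p.2.1 p.2.2 :=
    (measurable_dist.comp measurable_snd).const_mul (4 * π)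
  have hVm : Measurable fun p : ℝ × ((EuclideanSpace ℝ (Fin 3)) × (EuclideanSpace ℝ (Fin 3))) => V p.2.1 p.1 :=
    hVMeas.comp ((measurable_snd.fst).prodMk measurable_fst)
  have hfA : AEStronglyMeasurable (fun p : ℝ × ((EuclideanSpace ℝ (Fin 3)) × (EuclideanSpace ℝ (Fin 3))) => f p.2.2)
      (μt.prod (μΓ.prod μΩ)) := (hf.1.comp_snd (μ := μΓ)).comp_snd (μ := μt)
  have hGm : AEStronglyMeasurable G (μt.prod (μΓ.prod μΩ)) := by
    have h' := ((hA.aestronglyMeasurable.mul hfA).mul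
      hK.inv.aestronglyMeasurable).mul hVm.aestronglyMeasurable
    refine h'.congr (.of_forall fun p => ?_)
    simp only [hG, Pi.mul_apply, Pi.inv_apply, div_eq_mul_inv]
  -- a.e. membership
  have hmem3 : ∀ᵐ p ∂(μt.prod (μΓ.prod μΩ)),
      p.2.1 ∈ Γ ∧ p.2.2 ∈ Ω := by
    rw [hμt, hμΓ, hμΩ, Measure.prod_restrict, Measure.prod_restrict]
    filter_upwards [ae_restrict_mem
      (measurableSet_Ioc.prod (hΓ.measurableSet.prod hΩmeas))] with p hp
    exact ⟨hp.2.1, hp.2.2⟩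
  -- domination
  have hfabs1 : Integrable (fun z : (EuclideanSpace ℝ (Fin 3)) × (EuclideanSpace ℝ (Fin 3)) => |f z.2|) (μΓ.prod μΩ) := by
    simpa using (integrable_const (1 : ℝ)).mul_prod hf.abs
  have hfabs2 : Integrable (fun p : ℝ × ((EuclideanSpace ℝ (Fin 3)) × (EuclideanSpace ℝ (Fin 3))) => |f p.2.2|)
      (μt.prod (μΓ.prod μΩ)) := by
    simpa using (integrable_const (1 : ℝ)).mul_prod hfabs1
  have hGbdd : ∀ᵐ p ∂(μt.prod (μΓ.prod μΩ)),
      ‖G p‖ ≤ Cl * Cv / (4 * π * m) * |f p.2.2| := by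
    filter_upwards [hmem3] with p hp
    have hd : m ≤ dist p.2.1 p.2.2 := hsep _ hp.1 _ hp.2
    have hdpos : (0 : ℝ) < dist p.2.1 p.2.2 := lt_of_lt_of_le hm hd
    rw [Real.norm_eq_abs, hG]
    calc |lam p.2.2 (p.1 - dist p.2.1 p.2.2 / c) * f p.2.2 /
          (4 * π * dist p.2.1 p.2.2) * V p.2.1 p.1|
        = |lam p.2.2 (p.1 - dist p.2.1 p.2.2 / c)| * |f p.2.2| /
            (4 * π * dist p.2.1 p.2.2) * |V p.2.1 p.1| := by
          rw [abs_mul, abs_div, abs_mul, abs_of_pos (show (0:ℝ) < 4 * π * dist p.2.1 p.2.2 by positivity)]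
      _ ≤ Cl * |f p.2.2| / (4 * π * m) * Cv := by
          gcongr
          · exact hCl _ _
          · exact hCv _ _
      _ = Cl * Cv / (4 * π * m) * |f p.2.2| := by ring
  have J1 : Integrable G (μt.prod (μΓ.prod μΩ)) :=
    (hfabs2.const_mul (Cl * Cv / (4 * π * m))).mono' hGm hGbdd
  -- the shifted integrand after the time substitution
  set H : (EuclideanSpace ℝ (Fin 3)) × (EuclideanSpace ℝ (Fin 3)) → ℝ → ℝ := fun z s =>
    lam z.2 s * V z.1 (s + dist z.1 z.2 / c) * (f z.2 / (4 * π * dist z.1 z.2))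
    with hH
  have hmem2 : ∀ᵐ z ∂(μΓ.prod μΩ), z.1 ∈ Γ ∧ z.2 ∈ Ω := by
    rw [hμΓ, hμΩ, Measure.prod_restrict]
    filter_upwards [ae_restrict_mem (hΓ.measurableSet.prod hΩmeas)] with z hz
    exact ⟨hz.1, hz.2⟩
  have hsub : ∀ᵐ z ∂(μΓ.prod μΩ),
      (∫ t in Ioc (0 : ℝ) T, G (t, z)) = ∫ s in Ioc (0 : ℝ) T, H z s := by
    filter_upwards [hmem2] with z hz
    have ha : 0 < dist z.1 z.2 / c :=
      div_pos (lt_of_lt_of_le hm (hsep _ hz.1 _ hz.2)) hc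
    calc (∫ t in Ioc (0 : ℝ) T, G (t, z))
        = (∫ t in Ioc (0 : ℝ) T, lam z.2 (t - dist z.1 z.2 / c) * V z.1 t) *
            (f z.2 / (4 * π * dist z.1 z.2)) := by
          rw [← integral_mul_const]
          exact integral_congr_ae (.of_forall fun t => by rw [hG]; ring)
      _ = (∫ s in Ioc (0 : ℝ) T, lam z.2 s * V z.1 (s + dist z.1 z.2 / c)) *
            (f z.2 / (4 * π * dist z.1 z.2)) := by
          rw [hshift z.1 z.2 _ ha]
      _ = ∫ s in Ioc (0 : ℝ) T, H z s := by
          rw [← integral_mul_const]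
  have J2 : Integrable (fun z => ∫ s in Ioc (0 : ℝ) T, H z s) (μΓ.prod μΩ) :=
    (J1.integral_prod_right).congr hsub
  -- main computation
  calc (∫ t in Ioc (0 : ℝ) T, ∫ x in Γ, F x t * V x t ∂σ)
      = ∫ t in Ioc (0 : ℝ) T, ∫ x in Γ,
          (∫ y in Ω, lam y (t - dist x y / c) * f y / (4 * π * dist x y) * V x t)
          ∂σ := by
        refine integral_congr_ae (.of_forall fun t => ?_)
        refine integral_congr_ae (.of_forall fun x => ?_)
        beta_reduce
        rw [hF, ← integral_mul_const]
    _ = ∫ t in Ioc (0 : ℝ) T, ∫ z, G (t, z) ∂(μΓ.prod μΩ) := by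
        refine integral_congr_ae ?_
        filter_upwards [J1.prod_right_ae] with t ht
        exact (integral_prod _ ht).symm
    _ = ∫ z, (∫ t in Ioc (0 : ℝ) T, G (t, z)) ∂(μΓ.prod μΩ) :=
        integral_integral_swap (f := fun t z => G (t, z)) J1
    _ = ∫ z, (∫ s in Ioc (0 : ℝ) T, H z s) ∂(μΓ.prod μΩ) :=
        integral_congr_ae hsub
    _ = ∫ y in Ω, ∫ x in Γ, (∫ s in Ioc (0 : ℝ) T, H (x, y) s) ∂σ :=
        integral_prod_symm _ J2
    _ = ∫ y in Ω, f y * ∫ s in Ioc (0 : ℝ) T, lam y s * W y s := by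
        refine integral_congr_ae ?_
        filter_upwards [ae_restrict_mem hΩmeas] with y hy
        have hxs : Integrable (Function.uncurry fun (x : (EuclideanSpace ℝ (Fin 3))) (s : ℝ) =>
            lam y s * V x (s + dist x y / c) * (f y / (4 * π * dist x y)))
            (μΓ.prod μt) := by
          have m1 : Measurable fun q : (EuclideanSpace ℝ (Fin 3)) × ℝ => lam y q.2 :=
            hlamMeas.comp (measurable_const.prodMk measurable_snd)
          have m2 : Measurable fun q : (EuclideanSpace ℝ (Fin 3)) × ℝ => V q.1 (q.2 + dist q.1 y / c) :=
            hVMeas.comp (measurable_fst.prodMk (measurable_snd.add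
              ((measurable_fst.dist measurable_const).div_const c)))
          have m3 : Measurable fun q : (EuclideanSpace ℝ (Fin 3)) × ℝ => f y / (4 * π * dist q.1 y) :=
            measurable_const.div ((measurable_fst.dist measurable_const).const_mul
              (4 * π))
          have hmemq : ∀ᵐ q ∂(μΓ.prod μt), q.1 ∈ Γ := by
            rw [hμΓ, hμt, Measure.prod_restrict]
            filter_upwards [ae_restrict_mem (hΓ.measurableSet.prod measurableSet_Ioc)]
              with q hq
            exact hq.1
          refine (integrable_const (Cl * Cv * (|f y| / (4 * π * m)))).mono'
            ((m1.mul m2).mul m3).aestronglyMeasurable ?_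
          filter_upwards [hmemq] with q hq
          have hd : m ≤ dist q.1 y := hsep _ hq _ hy
          have hdpos : (0 : ℝ) < dist q.1 y := lt_of_lt_of_le hm hd
          rw [Real.norm_eq_abs, Function.uncurry]
          calc |lam y q.2 * V q.1 (q.2 + dist q.1 y / c) *
                (f y / (4 * π * dist q.1 y))|
              = |lam y q.2| * |V q.1 (q.2 + dist q.1 y / c)| *
                  (|f y| / (4 * π * dist q.1 y)) := by
                rw [abs_mul, abs_mul, abs_div, abs_of_pos (show (0:ℝ) < 4 * π * dist q.1 y by positivity)]
            _ ≤ Cl * Cv * (|f y| / (4 * π * m)) := by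
                gcongr
                · exact hCl _ _
                · exact hCv _ _
        calc (∫ x in Γ, (∫ s in Ioc (0 : ℝ) T, H (x, y) s) ∂σ)
            = ∫ s in Ioc (0 : ℝ) T, ∫ x in Γ,
                lam y s * V x (s + dist x y / c) * (f y / (4 * π * dist x y)) ∂σ :=
              integral_integral_swap hxs
          _ = ∫ s in Ioc (0 : ℝ) T, lam y s * f y *
                ∫ x in Γ, V x (s + dist x y / c) / (4 * π * dist x y) ∂σ := by
              refine integral_congr_ae (.of_forall fun s => ?_)
              beta_reduce
              rw [← integral_const_mul]
              exact integral_congr_ae (.of_forall fun x => by ring)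
          _ = f y * ∫ s in Ioc (0 : ℝ) T, lam y s * W y s := by
              rw [← integral_const_mul]
              refine integral_congr_ae (.of_forall fun s => ?_)
              beta_reduce
              rw [hW]
              ring

end
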